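/- Let d ≥ 1 and let β ∈ ℝ with β ≥ -1/4. For every X : Matrix (Fin d × Fin d) (Fin d × Fin d) ℂ with Matrix.rank X ≤ 2, one has 0 ≤ ‖X‖_F² + β · (‖Tr₁(X)‖_F² + ‖Tr₂(X)‖_F²) + β² · ‖Tr(X)‖². (In the paper's terms: the Werner state ρ_w is 2-undistillable whenever β ≥ -1/4.) -/

import Mathlib

open scoped ComplexConjugate InnerProductSpace Matrix

section Auxiliary

private lemma eucl_norm_sq' {m : Type*} [Fintype m] (x : EuclideanSpace ℂ m) :
    ‖x‖ ^ 2 = ∑ i, ‖x i‖ ^ 2 := by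
  rw [EuclideanSpace.norm_eq, Real.sq_sqrt]; positivity

/-- Cauchy–Schwarz for finite complex sums. -/
private lemma key_cs' {m : Type*} [Fintype m] (a b : m → ℂ) :
    ‖∑ j, a j * conj (b j)‖ ^ 2 ≤ (∑ j, ‖a j‖ ^ 2) * (∑ j, ‖b j‖ ^ 2) := by
  have h := norm_inner_le_norm (𝕜 := ℂ) (E := EuclideanSpace ℂ m)
      ((WithLp.equiv 2 _).symm b) ((WithLp.equiv 2 _).symm a)
  rw [PiLp.inner_apply] at h
  simp only [RCLike.inner_apply, WithLp.equiv_symm_apply, PiLp.toLp_apply, WithLp.ofLp_toLp] at h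
  have h2 : ‖∑ j, a j * conj (b j)‖
      ≤ ‖(WithLp.equiv 2 (m → ℂ)).symm b‖ * ‖(WithLp.equiv 2 (m → ℂ)).symm a‖ := by
    calc ‖∑ j, a j * conj (b j)‖ = ‖∑ j, conj (b j) * a j‖ := by
          congr 1; exact Finset.sum_congr rfl fun j _ => mul_comm _ _
      _ ≤ _ := by rw [Finset.sum_congr rfl fun j _ => mul_comm (conj (b j)) (a j)]; exact h
  have h3 := pow_le_pow_left₀ (norm_nonneg _) h2 2
  calc ‖∑ j, a j * conj (b j)‖ ^ 2 ≤ _ := h3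
    _ = (∑ j, ‖a j‖ ^ 2) * (∑ j, ‖b j‖ ^ 2) := by
        rw [mul_pow, eucl_norm_sq', eucl_norm_sq']
        simp only [WithLp.equiv_symm_apply, PiLp.toLp_apply, WithLp.ofLp_toLp]
        ring

/-- Frobenius bound for a sum of two "partial-trace" style matrices. -/
private lemma partial_bound' {ι κ : Type*} [Fintype ι] [Fintype κ]
    (u₁ u₂ v₁ v₂ : ι → κ → ℂ) :
    ∑ i, ∑ k, ‖(∑ j, u₁ i j * conj (v₁ k j)) + ∑ j, u₂ i j * conj (v₂ k j)‖ ^ 2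
      ≤ 2 * ((∑ i, ∑ j, ‖u₁ i j‖ ^ 2) * (∑ i, ∑ j, ‖v₁ i j‖ ^ 2)
           + (∑ i, ∑ j, ‖u₂ i j‖ ^ 2) * (∑ i, ∑ j, ‖v₂ i j‖ ^ 2)) := by
  classical
  set Z₁ : EuclideanSpace ℂ (ι × ι) :=
    (WithLp.equiv 2 _).symm (fun p => ∑ j, u₁ p.1 j * conj (v₁ p.2 j)) with hZ₁
  set Z₂ : EuclideanSpace ℂ (ι × ι) :=
    (WithLp.equiv 2 _).symm (fun p => ∑ j, u₂ p.1 j * conj (v₂ p.2 j)) with hZ₂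
  have hsum : ∑ i, ∑ k, ‖(∑ j, u₁ i j * conj (v₁ k j)) + ∑ j, u₂ i j * conj (v₂ k j)‖ ^ 2
      = ‖Z₁ + Z₂‖ ^ 2 := by
    rw [eucl_norm_sq', Fintype.sum_prod_type]
    rfl
  have h1 : ‖Z₁‖ ^ 2 ≤ (∑ i, ∑ j, ‖u₁ i j‖ ^ 2) * (∑ i, ∑ j, ‖v₁ i j‖ ^ 2) := by
    rw [eucl_norm_sq', Fintype.sum_prod_type, Finset.sum_mul_sum]
    exact Finset.sum_le_sum fun i _ => Finset.sum_le_sum fun k _ => key_cs' _ _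
  have h2 : ‖Z₂‖ ^ 2 ≤ (∑ i, ∑ j, ‖u₂ i j‖ ^ 2) * (∑ i, ∑ j, ‖v₂ i j‖ ^ 2) := by
    rw [eucl_norm_sq', Fintype.sum_prod_type, Finset.sum_mul_sum]
    exact Finset.sum_le_sum fun i _ => Finset.sum_le_sum fun k _ => key_cs' _ _
  have htri : ‖Z₁ + Z₂‖ ≤ ‖Z₁‖ + ‖Z₂‖ := norm_add_le _ _
  rw [hsum]
  nlinarith [norm_nonneg Z₁, norm_nonneg Z₂, sq_nonneg (‖Z₁‖ - ‖Z₂‖), norm_nonneg (Z₁ + Z₂)]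

/-- Every matrix of rank at most two can be written as `u₁ v₁* + u₂ v₂*` with `u₁ ⟂ u₂`. -/
private lemma rank_two_factor' {n : Type*} [Fintype n] [DecidableEq n]
    (X : Matrix n n ℂ) (hrank : X.rank ≤ 2) :
    ∃ u₁ u₂ v₁ v₂ : n → ℂ,
      (∀ p q, X p q = u₁ p * conj (v₁ q) + u₂ p * conj (v₂ q)) ∧
      (∑ p, conj (u₁ p) * u₂ p = 0) := by
  classical
  let e : (n → ℂ) ≃ₗ[ℂ] EuclideanSpace ℂ n := (WithLp.linearEquiv 2 ℂ (n → ℂ)).symm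
  let col : n → EuclideanSpace ℂ n := fun q => e (fun p => X p q)
  let W : Submodule ℂ (EuclideanSpace ℂ n) := Submodule.span ℂ (Set.range col)
  have hW : Module.finrank ℂ W ≤ 2 := by
    have hmap : W = (Submodule.span ℂ (Set.range Xᵀ)).map
        (e : (n → ℂ) →ₗ[ℂ] EuclideanSpace ℂ n) := by
      rw [Submodule.map_span]
      congr 1
      exact congrArg (Submodule.span ℂ)
        (Set.range_comp (e : (n → ℂ) →ₗ[ℂ] EuclideanSpace ℂ n) (fun q p => X p q))
    rw [hmap, LinearEquiv.finrank_map_eq]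
    rw [Matrix.rank_eq_finrank_span_cols] at hrank; exact hrank
  set m := Module.finrank ℂ W with hm
  let b := stdOrthonormalBasis ℂ W
  let U : Fin 2 → EuclideanSpace ℂ n := fun s =>
    if h : (s : ℕ) < m then (b ⟨s, h⟩ : EuclideanSpace ℂ n) else 0
  have horthE : ⟪U 0, U 1⟫_ℂ = 0 := by
    by_cases h1 : (1 : ℕ) < m
    · have h0 : (0 : ℕ) < m := by omega
      simp only [U, Fin.val_zero, Fin.val_one, dif_pos h0, dif_pos h1]
      have hij : (⟨0, h0⟩ : Fin m) ≠ ⟨1, h1⟩ := by simp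
      have h2 := b.orthonormal.2 hij
      rw [← Submodule.coe_inner]
      exact h2
    · have : U 1 = 0 := by simp only [U, Fin.val_one, dif_neg h1]
      rw [this, inner_zero_right]
  have hexp : ∀ x : EuclideanSpace ℂ n, x ∈ W →
      x = ∑ s : Fin 2, ⟪U s, x⟫_ℂ • U s := by
    intro x hx
    let w : W := ⟨x, hx⟩
    have hrep := b.sum_repr' w
    have hco : x = ∑ i : Fin m, ⟪(b i : EuclideanSpace ℂ n), x⟫_ℂ • (b i : EuclideanSpace ℂ n) := by
      have := congrArg (Subtype.val) hrep
      simp only [Submodule.coe_sum, SetLike.val_smul] at this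
      conv_lhs => rw [show x = (w : EuclideanSpace ℂ n) from rfl, ← this]
      refine Finset.sum_congr rfl fun i _ => ?_
      rw [Submodule.coe_inner]
    let g : ℕ → EuclideanSpace ℂ n := fun i =>
      if h : i < m then
        ⟪(b ⟨i, h⟩ : EuclideanSpace ℂ n), x⟫_ℂ • (b ⟨i, h⟩ : EuclideanSpace ℂ n) else 0
    have hrhs : ∑ s : Fin 2, ⟪U s, x⟫_ℂ • U s = ∑ i ∈ Finset.range 2, g i := by
      rw [← Fin.sum_univ_eq_sum_range]
      refine Finset.sum_congr rfl fun s _ => ?_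
      by_cases h : (s : ℕ) < m
      · simp only [U, g, dif_pos h]
      · simp only [U, g, dif_neg h, smul_zero]
    have hlhs : ∑ i : Fin m, ⟪(b i : EuclideanSpace ℂ n), x⟫_ℂ • (b i : EuclideanSpace ℂ n)
        = ∑ i ∈ Finset.range m, g i := by
      rw [← Fin.sum_univ_eq_sum_range]
      refine Finset.sum_congr rfl fun i _ => ?_
      simp only [g, dif_pos i.isLt, Fin.eta]
    have hsub : ∑ i ∈ Finset.range m, g i = ∑ i ∈ Finset.range 2, g i := by
      refine Finset.sum_subset (Finset.range_subset_range.2 hW) fun i _ hi => ?_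
      simp only [Finset.mem_range, not_lt] at hi
      simp only [g, dif_neg (by omega : ¬ i < m)]
    rw [hrhs, ← hsub, ← hlhs, ← hco]
  refine ⟨U 0, U 1, fun q => conj ⟪U 0, col q⟫_ℂ, fun q => conj ⟪U 1, col q⟫_ℂ, ?_, ?_⟩
  · intro p q
    have hmem : col q ∈ W := Submodule.subset_span ⟨q, rfl⟩
    have h := hexp (col q) hmem
    have happ := congrFun (congrArg (WithLp.equiv 2 (n → ℂ)) h) p
    simp only [Fin.sum_univ_two] at happ
    have hcolq : (WithLp.equiv 2 (n → ℂ)) (col q) p = X p q := rfl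
    rw [hcolq] at happ
    rw [happ]
    simp only [RingHomCompTriple.comp_apply, Complex.conj_conj]
    simp only [WithLp.equiv_apply, PiLp.add_apply, PiLp.smul_apply, smul_eq_mul,
      RingHom.id_apply]
    ring
  · have := horthE
    rw [PiLp.inner_apply] at this
    simp only [RCLike.inner_apply] at this
    rw [← this]
    exact Finset.sum_congr rfl fun p _ => mul_comm _ _

/-- Frobenius norm identity for a rank-two decomposition with orthogonal left factors. -/
private lemma frob_eq' {n : Type*} [Fintype n] (X : Matrix n n ℂ) (u₁ u₂ v₁ v₂ : n → ℂ)
    (hX : ∀ p q, X p q = u₁ p * conj (v₁ q) + u₂ p * conj (v₂ q))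
    (horth : ∑ p, conj (u₁ p) * u₂ p = 0) :
    ∑ p, ∑ q, ‖X p q‖ ^ 2
      = (∑ p, ‖u₁ p‖ ^ 2) * (∑ q, ‖v₁ q‖ ^ 2) + (∑ p, ‖u₂ p‖ ^ 2) * (∑ q, ‖v₂ q‖ ^ 2) := by
  have h21 : ∑ p, conj (u₂ p) * u₁ p = 0 := by
    have h := congrArg conj horth
    rw [map_sum, map_zero] at h
    rw [← h]
    refine Finset.sum_congr rfl fun p _ => ?_
    simp only [map_mul, Complex.conj_conj]
    ring
  have expand : ∀ p q, conj (X p q) * X p q =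
      (conj (u₁ p) * u₁ p) * (conj (v₁ q) * v₁ q)
      + (conj (u₁ p) * u₂ p) * (v₁ q * conj (v₂ q))
      + (conj (u₂ p) * u₁ p) * (conj (v₁ q) * v₂ q)
      + (conj (u₂ p) * u₂ p) * (conj (v₂ q) * v₂ q) := by
    intro p q
    rw [hX]
    simp only [map_add, map_mul, Complex.conj_conj]
    ring
  have hC : ∑ p, ∑ q, conj (X p q) * X p q =
      (∑ p, conj (u₁ p) * u₁ p) * (∑ q, conj (v₁ q) * v₁ q)
      + (∑ p, conj (u₂ p) * u₂ p) * (∑ q, conj (v₂ q) * v₂ q) := by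
    calc ∑ p, ∑ q, conj (X p q) * X p q
        = ∑ p, ∑ q, ((conj (u₁ p) * u₁ p) * (conj (v₁ q) * v₁ q)
          + (conj (u₁ p) * u₂ p) * (v₁ q * conj (v₂ q))
          + (conj (u₂ p) * u₁ p) * (conj (v₁ q) * v₂ q)
          + (conj (u₂ p) * u₂ p) * (conj (v₂ q) * v₂ q)) :=
          Finset.sum_congr rfl fun p _ => Finset.sum_congr rfl fun q _ => expand p q
      _ = (∑ p, conj (u₁ p) * u₁ p) * (∑ q, conj (v₁ q) * v₁ q)
          + (∑ p, conj (u₁ p) * u₂ p) * (∑ q, v₁ q * conj (v₂ q))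
          + (∑ p, conj (u₂ p) * u₁ p) * (∑ q, conj (v₁ q) * v₂ q)
          + (∑ p, conj (u₂ p) * u₂ p) * (∑ q, conj (v₂ q) * v₂ q) := by
          simp only [Finset.sum_add_distrib, ← Finset.mul_sum, ← Finset.sum_mul]
      _ = _ := by rw [horth, h21]; ring
  have hconj : ∀ z : ℂ, conj z * z = ((‖z‖ ^ 2 : ℝ) : ℂ) := by
    intro z
    rw [mul_comm, Complex.mul_conj]
    norm_cast
    rw [Complex.normSq_eq_norm_sq]
  simp only [hconj] at hC
  push_cast at hC
  exact_mod_cast hC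


private lemma final_combine (F S₁ S₂ T G β : ℝ) (hβ : -1 / 4 ≤ β)
    (hF : F = G) (hG : 0 ≤ G) (h1 : S₁ ≤ 2 * G) (h2 : S₂ ≤ 2 * G)
    (h10 : 0 ≤ S₁) (h20 : 0 ≤ S₂) (hT : 0 ≤ T) :
    0 ≤ F + β * (S₁ + S₂) + β ^ 2 * T := by
  have hβT : 0 ≤ β ^ 2 * T := by positivity
  rcases le_or_gt 0 β with hb | hb
  · have h3 : 0 ≤ β * (S₁ + S₂) := by positivity
    linarith
  · have ha : β * S₁ ≥ β * (2 * G) := mul_le_mul_of_nonpos_left h1 hb.le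
    have hbb : β * S₂ ≥ β * (2 * G) := mul_le_mul_of_nonpos_left h2 hb.le
    have h3 : 0 ≤ (1 + 4 * β) * G := mul_nonneg (by linarith) hG
    nlinarith

end Auxiliary

set_option maxHeartbeats 1600000 in
/-- For `β ≥ -1/4` and every rank-≤2 matrix
`X : Matrix (Fin d × Fin d) (Fin d × Fin d) ℂ`,
`‖X‖_F² + β(‖Tr₁X‖_F² + ‖Tr₂X‖_F²) + β²‖Tr X‖² ≥ 0`
(the Werner state with parameter `β` is 2-undistillable). -/
theorem werner_two_undistillable_of_beta_ge
    (d : ℕ) (hd : 1 ≤ d) (β : ℝ) (hβ : -1 / 4 ≤ β)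
    (X : Matrix (Fin d × Fin d) (Fin d × Fin d) ℂ)
    (hrank : X.rank ≤ 2) :
    0 ≤ (∑ p : Fin d × Fin d, ∑ q : Fin d × Fin d, ‖X p q‖ ^ 2)
        + β * ((∑ j : Fin d, ∑ l : Fin d, ‖∑ i : Fin d, X (i, j) (i, l)‖ ^ 2)
              + (∑ i : Fin d, ∑ k : Fin d, ‖∑ j : Fin d, X (i, j) (k, j)‖ ^ 2))
        + β ^ 2 * ‖∑ p : Fin d × Fin d, X p p‖ ^ 2 := by
  classical
  obtain ⟨u₁, u₂, v₁, v₂, hX, horth⟩ := rank_two_factor' X hrank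
  have hF := frob_eq' X u₁ u₂ v₁ v₂ hX horth
  have hG : (0:ℝ) ≤ (∑ p : Fin d × Fin d, ‖u₁ p‖ ^ 2) * (∑ q : Fin d × Fin d, ‖v₁ q‖ ^ 2)
      + (∑ p : Fin d × Fin d, ‖u₂ p‖ ^ 2) * (∑ q : Fin d × Fin d, ‖v₂ q‖ ^ 2) := by
    positivity
  -- second partial trace bound
  have cu₁ : ∑ i : Fin d, ∑ j : Fin d, ‖u₁ (i, j)‖ ^ 2 = ∑ p : Fin d × Fin d, ‖u₁ p‖ ^ 2 := by
    rw [Fintype.sum_prod_type]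
  have cu₂ : ∑ i : Fin d, ∑ j : Fin d, ‖u₂ (i, j)‖ ^ 2 = ∑ p : Fin d × Fin d, ‖u₂ p‖ ^ 2 := by
    rw [Fintype.sum_prod_type]
  have cv₁ : ∑ k : Fin d, ∑ j : Fin d, ‖v₁ (k, j)‖ ^ 2 = ∑ p : Fin d × Fin d, ‖v₁ p‖ ^ 2 := by
    rw [Fintype.sum_prod_type]
  have cv₂ : ∑ k : Fin d, ∑ j : Fin d, ‖v₂ (k, j)‖ ^ 2 = ∑ p : Fin d × Fin d, ‖v₂ p‖ ^ 2 := by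
    rw [Fintype.sum_prod_type]
  have du₁ : ∑ j : Fin d, ∑ i : Fin d, ‖u₁ (i, j)‖ ^ 2 = ∑ p : Fin d × Fin d, ‖u₁ p‖ ^ 2 := by
    rw [Fintype.sum_prod_type]; exact Finset.sum_comm
  have du₂ : ∑ j : Fin d, ∑ i : Fin d, ‖u₂ (i, j)‖ ^ 2 = ∑ p : Fin d × Fin d, ‖u₂ p‖ ^ 2 := by
    rw [Fintype.sum_prod_type]; exact Finset.sum_comm
  have dv₁ : ∑ l : Fin d, ∑ i : Fin d, ‖v₁ (i, l)‖ ^ 2 = ∑ p : Fin d × Fin d, ‖v₁ p‖ ^ 2 := by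
    rw [Fintype.sum_prod_type]; exact Finset.sum_comm
  have dv₂ : ∑ l : Fin d, ∑ i : Fin d, ‖v₂ (i, l)‖ ^ 2 = ∑ p : Fin d × Fin d, ‖v₂ p‖ ^ 2 := by
    rw [Fintype.sum_prod_type]; exact Finset.sum_comm
  have hS₂ : (∑ i : Fin d, ∑ k : Fin d, ‖∑ j : Fin d, X (i, j) (k, j)‖ ^ 2)
      ≤ 2 * ((∑ p : Fin d × Fin d, ‖u₁ p‖ ^ 2) * (∑ q : Fin d × Fin d, ‖v₁ q‖ ^ 2)
           + (∑ p : Fin d × Fin d, ‖u₂ p‖ ^ 2) * (∑ q : Fin d × Fin d, ‖v₂ q‖ ^ 2)) := by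
    have h := partial_bound' (fun i j => u₁ (i, j)) (fun i j => u₂ (i, j))
      (fun k j => v₁ (k, j)) (fun k j => v₂ (k, j))
    calc ∑ i : Fin d, ∑ k : Fin d, ‖∑ j : Fin d, X (i, j) (k, j)‖ ^ 2
        = ∑ i : Fin d, ∑ k : Fin d,
            ‖(∑ j, u₁ (i, j) * conj (v₁ (k, j))) + ∑ j, u₂ (i, j) * conj (v₂ (k, j))‖ ^ 2 := by
          refine Finset.sum_congr rfl fun i _ => Finset.sum_congr rfl fun k _ => ?_
          congr 2
          rw [← Finset.sum_add_distrib]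
          exact Finset.sum_congr rfl fun j _ => hX (i, j) (k, j)
      _ ≤ 2 * ((∑ i : Fin d, ∑ j : Fin d, ‖u₁ (i, j)‖ ^ 2)
              * (∑ k : Fin d, ∑ j : Fin d, ‖v₁ (k, j)‖ ^ 2)
            + (∑ i : Fin d, ∑ j : Fin d, ‖u₂ (i, j)‖ ^ 2)
              * (∑ k : Fin d, ∑ j : Fin d, ‖v₂ (k, j)‖ ^ 2)) := h
      _ = _ := by rw [cu₁, cu₂, cv₁, cv₂]
  have hS₁ : (∑ j : Fin d, ∑ l : Fin d, ‖∑ i : Fin d, X (i, j) (i, l)‖ ^ 2)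
      ≤ 2 * ((∑ p : Fin d × Fin d, ‖u₁ p‖ ^ 2) * (∑ q : Fin d × Fin d, ‖v₁ q‖ ^ 2)
           + (∑ p : Fin d × Fin d, ‖u₂ p‖ ^ 2) * (∑ q : Fin d × Fin d, ‖v₂ q‖ ^ 2)) := by
    have h := partial_bound' (fun j i => u₁ (i, j)) (fun j i => u₂ (i, j))
      (fun l i => v₁ (i, l)) (fun l i => v₂ (i, l))
    calc ∑ j : Fin d, ∑ l : Fin d, ‖∑ i : Fin d, X (i, j) (i, l)‖ ^ 2
        = ∑ j : Fin d, ∑ l : Fin d,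
            ‖(∑ i, u₁ (i, j) * conj (v₁ (i, l))) + ∑ i, u₂ (i, j) * conj (v₂ (i, l))‖ ^ 2 := by
          refine Finset.sum_congr rfl fun j _ => Finset.sum_congr rfl fun l _ => ?_
          congr 2
          rw [← Finset.sum_add_distrib]
          exact Finset.sum_congr rfl fun i _ => hX (i, j) (i, l)
      _ ≤ 2 * ((∑ j : Fin d, ∑ i : Fin d, ‖u₁ (i, j)‖ ^ 2)
              * (∑ l : Fin d, ∑ i : Fin d, ‖v₁ (i, l)‖ ^ 2)
            + (∑ j : Fin d, ∑ i : Fin d, ‖u₂ (i, j)‖ ^ 2)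
              * (∑ l : Fin d, ∑ i : Fin d, ‖v₂ (i, l)‖ ^ 2)) := h
      _ = _ := by rw [du₁, du₂, dv₁, dv₂]
  have hS₁0 : (0:ℝ) ≤ ∑ j : Fin d, ∑ l : Fin d, ‖∑ i : Fin d, X (i, j) (i, l)‖ ^ 2 := by
    positivity
  have hS₂0 : (0:ℝ) ≤ ∑ i : Fin d, ∑ k : Fin d, ‖∑ j : Fin d, X (i, j) (k, j)‖ ^ 2 := by
    positivity
  have hT0 : (0:ℝ) ≤ ‖∑ p : Fin d × Fin d, X p p‖ ^ 2 := by positivity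
  exact final_combine _ _ _ _ _ β hβ hF hG hS₁ hS₂ hS₁0 hS₂0 hT0
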